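/- (Tartar's lemma, step 0: finite-dimensional kernel.) Let E be a Banach space, E₀, E₁ normed spaces, A₀ : E → E₀ a compact linear operator and A₁ : E → E₁ a continuous linear operator. Suppose there is a constant C₀ such that ‖g‖_E ≤ C₀(‖A₀ g‖_{E₀} + ‖A₁ g‖_{E₁}) for all g ∈ E. Then P := Ker(A₁) is finite dimensional. -/

import Mathlib

/-- Tartar's lemma, step 0: if `A₀ : E → E₀` is a compact linear operator, `A₁ : E → E₁` is a
continuous linear operator and `‖g‖ ≤ C₀(‖A₀g‖ + ‖A₁g‖)` for all `g`, then `Ker A₁` is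
finite dimensional. -/
theorem stmt_11 {E E₀ E₁ : Type*}
    [NormedAddCommGroup E] [NormedSpace ℝ E] [CompleteSpace E]
    [NormedAddCommGroup E₀] [NormedSpace ℝ E₀]
    [NormedAddCommGroup E₁] [NormedSpace ℝ E₁]
    (A₀ : E →L[ℝ] E₀) (hA₀ : IsCompactOperator A₀)
    (A₁ : E →L[ℝ] E₁)
    (C₀ : ℝ) (hbound : ∀ g : E, ‖g‖ ≤ C₀ * (‖A₀ g‖ + ‖A₁ g‖)) :
    FiniteDimensional ℝ (LinearMap.ker (A₁ : E →ₗ[ℝ] E₁)) := by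
  set P : Submodule ℝ E := LinearMap.ker (A₁ : E →ₗ[ℝ] E₁)
  have hPclosed : IsClosed (P : Set E) := ContinuousLinearMap.isClosed_ker A₁
  haveI : CompleteSpace P := hPclosed.completeSpace_coe
  set B : P →L[ℝ] E₀ := A₀.comp (P.subtypeL)
  have hB : IsCompactOperator B := hA₀.comp_clm P.subtypeL
  -- bound on P
  have hbP : ∀ g : P, ‖g‖ ≤ C₀ * ‖B g‖ := by
    intro g
    have hg : A₁ (g : E) = 0 := g.2
    have := hbound (g : E)
    simpa [B, hg] using this
  have hanti : AntilipschitzWith (Real.toNNReal C₀) B := by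
    apply AntilipschitzWith.of_le_mul_dist
    intro x y
    have h := hbP (x - y)
    have hBxy : B (x - y) = B x - B y := map_sub B x y
    rw [dist_eq_norm, dist_eq_norm]
    calc ‖x - y‖ ≤ C₀ * ‖B (x - y)‖ := h
      _ ≤ (Real.toNNReal C₀ : ℝ) * ‖B (x - y)‖ :=
          mul_le_mul_of_nonneg_right (Real.le_coe_toNNReal C₀) (norm_nonneg _)
      _ = (Real.toNNReal C₀ : ℝ) * ‖B x - B y‖ := by rw [hBxy]
  have hui : IsUniformInducing B := hanti.isUniformInducing B.uniformContinuous
  obtain ⟨K, hK, hKb⟩ := hB.image_closedBall_subset_compact (𝕜₁ := ℝ) 1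
  have htb : TotallyBounded (Metric.closedBall (0 : P) 1) := by
    refine TotallyBounded.subset ?_ (totallyBounded_preimage hui hK.totallyBounded)
    intro x hx
    exact hKb ⟨x, hx, rfl⟩
  have hcompact : IsCompact (Metric.closedBall (0 : P) 1) :=
    TotallyBounded.isCompact_of_isClosed htb Metric.isClosed_closedBall
  exact FiniteDimensional.of_isCompact_closedBall₀ ℝ one_pos hcompact
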